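/- Let G be a finite group with identity e, and let {I, J} be a partition of [n] with |I| = ⌈n/2⌉ and |J| = ⌊n/2⌋. Then {(i,e,i) : i ∈ [n]} ∪ {(i,g,j) : i ∈ I, j ∈ J, g ∈ G} is an independent subset of the Brandt semigroup B(G,n). -/

import Mathlib

/-- The Brandt semigroup `B(G, n)` over a group (or semigroup) `G`. -/
def BrandtSG (G : Type*) (n : ℕ) : Type _ := Option (Fin n × G × Fin n)

def BrandtSG.mul {G : Type*} [Mul G] {n : ℕ} : BrandtSG G n → BrandtSG G n → BrandtSG G n
  | some (i, a, j), some (k, b, l) => if j = k then some (i, a * b, l) else none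
  | _, _ => none

instance (G : Type*) [Mul G] (n : ℕ) : Mul (BrandtSG G n) := ⟨BrandtSG.mul⟩

instance (G : Type*) [Semigroup G] (n : ℕ) : Semigroup (BrandtSG G n) where
  mul_assoc a b c := by
    show BrandtSG.mul (BrandtSG.mul a b) c = BrandtSG.mul a (BrandtSG.mul b c)
    rcases a with _ | ⟨i, a, j⟩ <;> rcases b with _ | ⟨k, b, l⟩ <;> rcases c with _ | ⟨p, c, q⟩
    all_goals (try rfl)
    case some.some.none =>
      show BrandtSG.mul (if j = k then some (i, a * b, l) else none : Option _) none = none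
      by_cases h1 : j = k <;> simp only [h1, ite_true, ite_false] <;> rfl
    case some.some.some =>
      show BrandtSG.mul (if j = k then some (i, a * b, l) else none : Option _) (some (p, c, q)) =
        BrandtSG.mul (some (i, a, j)) (if l = p then some (k, b * c, q) else none : Option _)
      by_cases h1 : j = k <;> by_cases h2 : l = p
      · subst k p
        simp only [ite_true]
        show (if l = l then some (i, a * b * c, q) else none : Option _) =
          (if j = j then some (i, a * (b * c), q) else none : Option _)
        simp only [ite_true, mul_assoc]
      · subst k
        simp only [ite_true, h2, ite_false]
        show (if l = p then some (i, a * b * c, q) else none : Option _) = none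
        simp only [h2, ite_false]
      · subst p
        simp only [ite_true, h1, ite_false]
        show none = (if j = k then some (i, a * (b * c), q) else none : Option _)
        simp only [h1, ite_false]
      · simp only [h1, h2, ite_false]
        rfl

theorem brandt_independent_set (G : Type*) [Group G] [Fintype G] (n : ℕ)
    (I J : Set (Fin n)) (hIJ : I ∪ J = Set.univ) (hdisj : I ∩ J = ∅)
    (hI : I.ncard = (n + 1) / 2) (hJ : J.ncard = n / 2) :
    let U : Set (BrandtSG G n) :=
      {x | ∃ i : Fin n, x = some (i, 1, i)} ∪
      {x | ∃ i ∈ I, ∃ j ∈ J, ∃ g : G, x = some (i, g, j)}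
    ∀ a ∈ U, a ∉ Subsemigroup.closure (U \ {a}) := by
  intro U a ha hmem
  set S : Set (BrandtSG G n) := U \ {a} with hS
  have hdisj' : ∀ x : Fin n, x ∈ I → x ∈ J → False := by
    intro x hxI hxJ
    have : x ∈ I ∩ J := ⟨hxI, hxJ⟩
    rw [hdisj] at this
    exact this
  have hmul : ∀ x ∈ S ∪ {(none : BrandtSG G n)}, ∀ y ∈ S ∪ {(none : BrandtSG G n)},
      x * y ∈ S ∪ {(none : BrandtSG G n)} := by
    intro x hx y hy
    rcases x with _ | ⟨i₁, g₁, j₁⟩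
    · right; rfl
    rcases y with _ | ⟨i₂, g₂, j₂⟩
    · right
      show BrandtSG.mul _ _ ∈ _
      rfl
    rcases hx with hx | hx; swap
    · exact (Option.some_ne_none _ hx).elim
    rcases hy with hy | hy; swap
    · exact (Option.some_ne_none _ hy).elim
    show BrandtSG.mul _ _ ∈ _
    by_cases hj : j₁ = i₂
    · rw [show BrandtSG.mul (some (i₁, g₁, j₁)) (some (i₂, g₂, j₂)) = (some (i₁, g₁ * g₂, j₂) : BrandtSG G n) from if_pos hj]
      rcases hx.1 with ⟨k, hk⟩ | ⟨k, hkI, l, hlJ, g, hkl⟩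
      · -- x is diagonal: x = (k,1,k), so i₁ = j₁ = k, product = y
        obtain ⟨h1, h2, h3⟩ : i₁ = k ∧ g₁ = 1 ∧ j₁ = k := by
          have := Option.some_injective _ hk
          simpa [Prod.ext_iff] using this
        rw [h2, one_mul]
        have hii : i₁ = i₂ := by rw [h1, ← h3]; exact hj
        rw [hii]
        exact Or.inl hy
      · rcases hy.1 with ⟨m, hm⟩ | ⟨m, hmI, l', hl'J, g', hml⟩
        · -- y is diagonal: y = (m,1,m), so i₂ = j₂ = m, product = x
          obtain ⟨h1', h2', h3'⟩ : i₂ = m ∧ g₂ = 1 ∧ j₂ = m := by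
            have := Option.some_injective _ hm
            simpa [Prod.ext_iff] using this
          rw [h2', mul_one]
          have hjj : j₂ = j₁ := by rw [h3', ← h1', ← hj]
          rw [hjj]
          exact Or.inl hx
        · -- both cross: j₁ ∈ J and j₁ = i₂ ∈ I, contradiction
          obtain ⟨h1, h2, h3⟩ : i₁ = k ∧ g₁ = g ∧ j₁ = l := by
            have := Option.some_injective _ hkl
            simpa [Prod.ext_iff] using this
          obtain ⟨h1', h2', h3'⟩ : i₂ = m ∧ g₂ = g' ∧ j₂ = l' := by
            have := Option.some_injective _ hml
            simpa [Prod.ext_iff] using this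
          exact (hdisj' j₁ (by rw [hj, h1']; exact hmI) (by rw [h3]; exact hlJ)).elim
    · rw [show BrandtSG.mul (some (i₁, g₁, j₁)) (some (i₂, g₂, j₂)) = (none : BrandtSG G n) from if_neg hj]
      right; rfl
  let T : Subsemigroup (BrandtSG G n) :=
    { carrier := S ∪ {(none : BrandtSG G n)}
      mul_mem' := fun hx hy => hmul _ hx _ hy }
  have hle : Subsemigroup.closure S ≤ T :=
    Subsemigroup.closure_le.2 Set.subset_union_left
  have haT : a ∈ (T : Set (BrandtSG G n)) := hle hmem
  rcases haT with h | h
  · exact h.2 rfl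
  · rcases ha with ⟨i, rfl⟩ | ⟨i, _, j, _, g, rfl⟩ <;> exact Option.some_ne_none _ h
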